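/- Let K ⊆ ℝ^m be nonempty, closed and convex, (Ω, ℱ, ℙ) a probability space, T > 0, and let μ denote the product of Lebesgue measure on [0, T] with ℙ. Let F : [0, T] × Ω × ℝ^n × ℝ^m → ℝ^m be measurable, with constants 0 < C ≤ L_F such that for a.e. (s, ω): ‖F(s, ω, x₁, u₁) − F(s, ω, x₂, u₂)‖ ≤ L_F (‖x₁ − x₂‖ + ‖u₁ − u₂‖) and ⟨F(s, ω, x, u₁) − F(s, ω, x, u₂), u₁ − u₂⟩ ≥ C ‖u₁ − u₂‖² for all x, x₁, x₂ ∈ ℝ^n and u, u₁, u₂ ∈ ℝ^m, and with F(·, ·, 0, u₀) ∈ L²(μ; ℝ^m) for some u₀ ∈ ℝ^m. For j = 1, 2, let x_j ∈ L²(μ; ℝ^n) and let u_j ∈ L²(μ; ℝ^m) with u_j(s, ω) ∈ K a.e. be the (unique) solution of ⟨F(s, ω, x_j(s, ω), u_j(s, ω)), v − u_j(s, ω)⟩ ≥ 0 for all v ∈ K, for a.e. (s, ω) ∈ [0, T] × Ω. Then for every ρ with 0 < ρ < 2C/L_F² and every t ∈ [0, T], E ∫_0^t ‖u₁(s, ω)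 − u₂(s, ω)‖² ds ≤ M' · E ∫_0^t ‖x₁(s, ω) − x₂(s, ω)‖² ds, where M' = ρ²L_F² / (1 − √(1 − 2ρC + ρ²L_F²))². -/

import Mathlib

open MeasureTheory
open scoped RealInnerProductSpace

lemma stmt_10_alg {C L_F ρ : ℝ} (hC : 0 < C) (hCL : C ≤ L_F) (hρ0 : 0 < ρ)
    (hρ : ρ < 2 * C / L_F ^ 2) :
    (L_F / C) ^ 2 ≤ ρ ^ 2 * L_F ^ 2 / (1 - Real.sqrt (1 - 2 * ρ * C + ρ ^ 2 * L_F ^ 2)) ^ 2 := by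
  have hL : 0 < L_F := hC.trans_le hCL
  set q : ℝ := 1 - 2 * ρ * C + ρ ^ 2 * L_F ^ 2 with hq
  have hC2 : C ^ 2 ≤ L_F ^ 2 := by nlinarith
  have hq1 : (1 - ρ * C) ^ 2 ≤ q := by
    nlinarith [mul_nonneg (sq_nonneg ρ) (sub_nonneg.mpr hC2)]
  have hsq : 1 - ρ * C ≤ Real.sqrt q := by
    have h := Real.sqrt_le_sqrt hq1
    rw [Real.sqrt_sq_eq_abs] at h
    exact (le_abs_self _).trans h
  have hρL : ρ * L_F ^ 2 < 2 * C := by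
    rw [lt_div_iff₀ (by positivity)] at hρ; linarith
  have hqlt : q < 1 := by nlinarith
  have hq0 : 0 ≤ q := le_trans (sq_nonneg _) hq1
  have hsqlt : Real.sqrt q < 1 := by
    have := Real.sqrt_lt_sqrt hq0 hqlt
    simpa using this
  have hden : 0 < 1 - Real.sqrt q := by linarith
  have hden2 : (1 - Real.sqrt q) ^ 2 ≤ (ρ * C) ^ 2 := by nlinarith
  have h1 : (L_F / C) ^ 2 = ρ ^ 2 * L_F ^ 2 / (ρ * C) ^ 2 := by
    field_simp
  rw [h1]
  exact div_le_div_of_nonneg_left (by positivity) (by positivity) hden2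

/-- Stability of solutions of the pointwise stochastic variational inequality with
respect to the state process: with `μ = Leb|_{[0,T]} ⊗ ℙ`, `F(s, ω, ·, ·)` jointly
`L_F`-Lipschitz and `C`-strongly monotone in `u` (a.e., with `0 < C ≤ L_F`) and square
integrable at `(0, u₀)`, if `u_j ∈ L²(μ; ℝ^m)` is `K`-valued a.e. and solves the SVI
associated with `x_j ∈ L²(μ; ℝ^n)` (`j = 1, 2`), then for every `0 < ρ < 2C/L_F²` and
`t ∈ [0, T]`:
`E ∫_0^t ‖u₁ − u₂‖² ds ≤ M' · E ∫_0^t ‖x₁ − x₂‖² ds`,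
with `M' = ρ²L_F² / (1 − √(1 − 2ρC + ρ²L_F²))²`. -/
theorem stmt_10 {n m : ℕ} {Ω : Type*} [MeasurableSpace Ω] (ℙ : Measure Ω)
    [IsProbabilityMeasure ℙ]
    (K : Set (EuclideanSpace ℝ (Fin m)))
    (hKne : K.Nonempty) (hKcl : IsClosed K) (hKcv : Convex ℝ K)
    (T : ℝ) (hT : 0 < T)
    (μ : Measure (ℝ × Ω)) (hμ : μ = (volume.restrict (Set.Icc 0 T)).prod ℙ)
    (F : ℝ × Ω → EuclideanSpace ℝ (Fin n) → EuclideanSpace ℝ (Fin m) →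
      EuclideanSpace ℝ (Fin m))
    (hFmeas : Measurable fun q : (ℝ × Ω) × EuclideanSpace ℝ (Fin n) ×
      EuclideanSpace ℝ (Fin m) => F q.1 q.2.1 q.2.2)
    (C L_F : ℝ) (hC : 0 < C) (hCL : C ≤ L_F)
    (hLip : ∀ᵐ p ∂μ, ∀ (x₁ x₂ : EuclideanSpace ℝ (Fin n))
      (u₁ u₂ : EuclideanSpace ℝ (Fin m)),
      ‖F p x₁ u₁ - F p x₂ u₂‖ ≤ L_F * (‖x₁ - x₂‖ + ‖u₁ - u₂‖))
    (hmono : ∀ᵐ p ∂μ, ∀ (x : EuclideanSpace ℝ (Fin n))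
      (u₁ u₂ : EuclideanSpace ℝ (Fin m)),
      C * ‖u₁ - u₂‖ ^ 2 ≤ ⟪F p x u₁ - F p x u₂, u₁ - u₂⟫)
    (u₀ : EuclideanSpace ℝ (Fin m)) (hFu₀ : MemLp (fun p => F p 0 u₀) 2 μ)
    (x₁ x₂ : ℝ × Ω → EuclideanSpace ℝ (Fin n))
    (hx₁ : MemLp x₁ 2 μ) (hx₂ : MemLp x₂ 2 μ)
    (u₁ u₂ : ℝ × Ω → EuclideanSpace ℝ (Fin m))
    (hu₁ : MemLp u₁ 2 μ) (hu₂ : MemLp u₂ 2 μ)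
    (hu₁K : ∀ᵐ p ∂μ, u₁ p ∈ K) (hu₂K : ∀ᵐ p ∂μ, u₂ p ∈ K)
    (hvi₁ : ∀ᵐ p ∂μ, ∀ v ∈ K, 0 ≤ ⟪F p (x₁ p) (u₁ p), v - u₁ p⟫)
    (hvi₂ : ∀ᵐ p ∂μ, ∀ v ∈ K, 0 ≤ ⟪F p (x₂ p) (u₂ p), v - u₂ p⟫)
    (ρ : ℝ) (hρ0 : 0 < ρ) (hρ : ρ < 2 * C / L_F ^ 2)
    (t : ℝ) (ht : t ∈ Set.Icc (0 : ℝ) T) :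
    ∫ p in Set.Icc 0 t ×ˢ (Set.univ : Set Ω), ‖u₁ p - u₂ p‖ ^ 2 ∂μ
      ≤ ρ ^ 2 * L_F ^ 2 / (1 - Real.sqrt (1 - 2 * ρ * C + ρ ^ 2 * L_F ^ 2)) ^ 2
        * ∫ p in Set.Icc 0 t ×ˢ (Set.univ : Set Ω), ‖x₁ p - x₂ p‖ ^ 2 ∂μ := by
  have hL : 0 < L_F := hC.trans_le hCL
  -- pointwise bound a.e.
  have hpt : ∀ᵐ p ∂μ, ‖u₁ p - u₂ p‖ ^ 2 ≤ (L_F / C) ^ 2 * ‖x₁ p - x₂ p‖ ^ 2 := by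
    filter_upwards [hLip, hmono, hu₁K, hu₂K, hvi₁, hvi₂] with p hLp hMp h1K h2K hv1 hv2
    set d : ℝ := ‖u₁ p - u₂ p‖ with hd
    set e : ℝ := ‖x₁ p - x₂ p‖ with he
    have key : C * d ^ 2 ≤ L_F * e * d := by
      have hA : ⟪F p (x₁ p) (u₁ p) - F p (x₂ p) (u₂ p), u₁ p - u₂ p⟫ ≤ 0 := by
        have h1 := hv1 (u₂ p) h2K
        have h2 := hv2 (u₁ p) h1K
        have : ⟪F p (x₁ p) (u₁ p), u₁ p - u₂ p⟫ ≤ 0 := by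
          have := h1
          rw [show u₂ p - u₁ p = -(u₁ p - u₂ p) by abel, inner_neg_right] at this
          linarith
        rw [inner_sub_left]
        linarith [h2]
      have hB := hMp (x₁ p) (u₁ p) (u₂ p)
      have hsplit : ⟪F p (x₁ p) (u₁ p) - F p (x₁ p) (u₂ p), u₁ p - u₂ p⟫
          = ⟪F p (x₁ p) (u₁ p) - F p (x₂ p) (u₂ p), u₁ p - u₂ p⟫
            + ⟪F p (x₂ p) (u₂ p) - F p (x₁ p) (u₂ p), u₁ p - u₂ p⟫ := by
        rw [← inner_add_left]; congr 1; abel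
      have hCS : ⟪F p (x₂ p) (u₂ p) - F p (x₁ p) (u₂ p), u₁ p - u₂ p⟫
          ≤ ‖F p (x₂ p) (u₂ p) - F p (x₁ p) (u₂ p)‖ * d :=
        real_inner_le_norm _ _
      have hLipx : ‖F p (x₂ p) (u₂ p) - F p (x₁ p) (u₂ p)‖ ≤ L_F * e := by
        have := hLp (x₂ p) (x₁ p) (u₂ p) (u₂ p)
        simpa [he, norm_sub_rev (x₂ p) (x₁ p)] using this
      have hd0 : 0 ≤ d := norm_nonneg _
      calc C * d ^ 2 ≤ ⟪F p (x₁ p) (u₁ p) - F p (x₁ p) (u₂ p), u₁ p - u₂ p⟫ := hB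
        _ ≤ ‖F p (x₂ p) (u₂ p) - F p (x₁ p) (u₂ p)‖ * d := by
            rw [hsplit]; linarith [hCS]
        _ ≤ L_F * e * d := by
            exact mul_le_mul_of_nonneg_right hLipx hd0
    have hde : d ≤ (L_F / C) * e := by
      rcases eq_or_lt_of_le (norm_nonneg (u₁ p - u₂ p)) with h0 | h0
      · rw [← hd] at h0
        rw [← h0]
        positivity
      · rw [← hd] at h0
        rw [div_mul_eq_mul_div, le_div_iff₀ hC]
        nlinarith
    have hd0 : 0 ≤ d := norm_nonneg _
    calc d ^ 2 ≤ ((L_F / C) * e) ^ 2 := by nlinarith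
      _ = (L_F / C) ^ 2 * e ^ 2 := by ring
  set s : Set (ℝ × Ω) := Set.Icc 0 t ×ˢ (Set.univ : Set Ω)
  have hptr : ∀ᵐ p ∂(μ.restrict s),
      ‖u₁ p - u₂ p‖ ^ 2 ≤ (L_F / C) ^ 2 * ‖x₁ p - x₂ p‖ ^ 2 :=
    ae_restrict_of_ae hpt
  have hxint : Integrable (fun p => ‖x₁ p - x₂ p‖ ^ 2) (μ.restrict s) := by
    have : MemLp (x₁ - x₂) 2 μ := hx₁.sub hx₂
    have h2 : Integrable (fun p => ‖(x₁ - x₂) p‖ ^ 2) μ := by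
      simpa using this.norm.integrable_sq
    exact (h2.restrict (s := s)).congr (by
      filter_upwards with p
      simp [Pi.sub_apply])
  have hmono' : ∫ p in s, ‖u₁ p - u₂ p‖ ^ 2 ∂μ
      ≤ ∫ p in s, (L_F / C) ^ 2 * ‖x₁ p - x₂ p‖ ^ 2 ∂μ := by
    refine integral_mono_of_nonneg ?_ (hxint.const_mul _) hptr
    filter_upwards with p using by positivity
  rw [integral_const_mul] at hmono'
  have hI0 : 0 ≤ ∫ p in s, ‖x₁ p - x₂ p‖ ^ 2 ∂μ :=
    integral_nonneg fun p => by positivity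
  calc ∫ p in s, ‖u₁ p - u₂ p‖ ^ 2 ∂μ
      ≤ (L_F / C) ^ 2 * ∫ p in s, ‖x₁ p - x₂ p‖ ^ 2 ∂μ := hmono'
    _ ≤ ρ ^ 2 * L_F ^ 2 / (1 - Real.sqrt (1 - 2 * ρ * C + ρ ^ 2 * L_F ^ 2)) ^ 2
        * ∫ p in s, ‖x₁ p - x₂ p‖ ^ 2 ∂μ :=
        mul_le_mul_of_nonneg_right (stmt_10_alg hC hCL hρ0 hρ) hI0
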